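/- Suppose u : ℝ → ℝ is twice continuously differentiable and satisfies −u'' = λu on (0,1) with u(0) = u(1) = 0, where λ > 0, and u is not identically zero on [0,1]. Then there exists a positive integer n with λ = (nπ)². -/

import Mathlib

open Real Set

theorem dirichlet_eigenvalues_are_n_pi_sq (u : ℝ → ℝ) (lam : ℝ)
    (hu : ContDiff ℝ 2 u)
    (hode : ∀ x ∈ Ioo (0:ℝ) 1, -(deriv (deriv u) x) = lam * u x)
    (h0 : u 0 = 0) (h1 : u 1 = 0) (hlam : 0 < lam)
    (hnt : ∃ x ∈ Icc (0:ℝ) 1, u x ≠ 0) :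
    ∃ n : ℕ, 1 ≤ n ∧ lam = (n * π) ^ 2 := by
  set k := Real.sqrt lam with hk
  have hkpos : 0 < k := Real.sqrt_pos.mpr hlam
  have hk2 : k ^ 2 = lam := Real.sq_sqrt hlam.le
  -- regularity
  have hu1 : Differentiable ℝ u := hu.differentiable (by norm_num)
  have hu' : ContDiff ℝ 1 (deriv u) := by
    have h2 : ContDiff ℝ ((1 : ℕ) + 1) u := by exact_mod_cast hu
    exact (contDiff_succ_iff_deriv.mp h2).2.2
  have hdu : Differentiable ℝ (deriv u) := hu'.differentiable (by norm_num)
  have hcont2 : Continuous (deriv (deriv u)) := (contDiff_one_iff_deriv.mp hu').2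
  -- the ODE extends to the closed interval
  have hode' : ∀ x ∈ Icc (0:ℝ) 1, deriv (deriv u) x = -(lam * u x) := by
    have hsub : Icc (0:ℝ) 1 ⊆ {x | deriv (deriv u) x + lam * u x = 0} := by
      rw [← closure_Ioo (by norm_num : (0:ℝ) ≠ 1)]
      apply closure_minimal
      · intro x hx
        have := hode x hx
        simp only [Set.mem_setOf_eq]
        linarith
      · exact isClosed_eq (hcont2.add (continuous_const.mul hu1.continuous))
          continuous_const
    intro x hx
    have := hsub hx
    simp only [Set.mem_setOf_eq] at this
    linarith
  -- derivatives of sin(kx), cos(kx)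
  have hs : ∀ x : ℝ, HasDerivAt (fun y => Real.sin (k*y)) (k * Real.cos (k*x)) x := by
    intro x
    have h := (Real.hasDerivAt_sin (k*x)).comp x ((hasDerivAt_id x).const_mul k)
    have h2 : k * Real.cos (k*x) = Real.cos (k*x) * (k * 1) := by ring
    rw [h2]
    exact h
  have hc : ∀ x : ℝ, HasDerivAt (fun y => Real.cos (k*y)) (-(k * Real.sin (k*x))) x := by
    intro x
    have h := (Real.hasDerivAt_cos (k*x)).comp x ((hasDerivAt_id x).const_mul k)
    have h2 : -(k * Real.sin (k*x)) = -Real.sin (k*x) * (k * 1) := by ring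
    rw [h2]
    exact h
  -- Wronskian-type functions
  set W1 : ℝ → ℝ := fun x => deriv u x * Real.sin (k*x) - k * (u x * Real.cos (k*x)) with hW1def
  set W2 : ℝ → ℝ := fun x => deriv u x * Real.cos (k*x) + k * (u x * Real.sin (k*x)) with hW2def
  have hW1d : ∀ x ∈ Icc (0:ℝ) 1, HasDerivAt W1 0 x := by
    intro x hx
    have hd := ((hdu x).hasDerivAt.mul (hs x)).sub
      (((hu1 x).hasDerivAt.mul (hc x)).const_mul k)
    have he : deriv (deriv u) x * Real.sin (k*x) + deriv u x * (k * Real.cos (k*x)) -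
        k * (deriv u x * Real.cos (k*x) + u x * -(k * Real.sin (k*x))) = 0 := by
      rw [hode' x hx]
      linear_combination u x * Real.sin (k*x) * hk2
    rw [he] at hd
    exact hd
  have hW2d : ∀ x ∈ Icc (0:ℝ) 1, HasDerivAt W2 0 x := by
    intro x hx
    have hd := ((hdu x).hasDerivAt.mul (hc x)).add
      (((hu1 x).hasDerivAt.mul (hs x)).const_mul k)
    have he : deriv (deriv u) x * Real.cos (k*x) + deriv u x * -(k * Real.sin (k*x)) +
        k * (deriv u x * Real.sin (k*x) + u x * (k * Real.cos (k*x))) = 0 := by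
      rw [hode' x hx]
      linear_combination u x * Real.cos (k*x) * hk2
    rw [he] at hd
    exact hd
  have hW1const : ∀ x ∈ Icc (0:ℝ) 1, W1 x = W1 0 := by
    apply constant_of_has_deriv_right_zero
    · exact Continuous.continuousOn (by fun_prop)
    · intro x hx
      exact (hW1d x (Ico_subset_Icc_self hx)).hasDerivWithinAt
  have hW2const : ∀ x ∈ Icc (0:ℝ) 1, W2 x = W2 0 := by
    apply constant_of_has_deriv_right_zero
    · exact Continuous.continuousOn (by fun_prop)
    · intro x hx
      exact (hW2d x (Ico_subset_Icc_self hx)).hasDerivWithinAt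
  have hW10 : W1 0 = 0 := by simp [hW1def, h0]
  have hW20 : W2 0 = deriv u 0 := by simp [hW2def, h0]
  -- key formula
  have key : ∀ x ∈ Icc (0:ℝ) 1, k * u x = deriv u 0 * Real.sin (k*x) := by
    intro x hx
    have e1 := hW1const x hx
    have e2 := hW2const x hx
    rw [hW10] at e1
    rw [hW20] at e2
    simp only [hW1def, hW2def] at e1 e2
    linear_combination Real.sin (k*x) * e2 - Real.cos (k*x) * e1 - k * u x * Real.sin_sq_add_cos_sq (k*x)
  by_cases hd0 : deriv u 0 = 0
  · exfalso
    obtain ⟨x, hx, hux⟩ := hnt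
    have := key x hx
    rw [hd0] at this
    simp at this
    rcases this with h | h
    · exact absurd h hkpos.ne'
    · exact hux h
  · have hsk : Real.sin k = 0 := by
      have := key 1 (by norm_num)
      rw [h1] at this
      simp at this
      rcases this with h | h
      · exact absurd h hd0
      · simpa using h
    obtain ⟨n, hn⟩ := Real.sin_eq_zero_iff.mp hsk
    have hnpos : 0 < n := by
      by_contra hle
      push_neg at hle
      have : (n : ℝ) * π ≤ 0 := mul_nonpos_of_nonpos_of_nonneg (by exact_mod_cast hle) Real.pi_pos.le
      linarith [hn ▸ hkpos]
    refine ⟨n.toNat, by omega, ?_⟩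
    have hnn : ((n.toNat : ℕ) : ℝ) = (n : ℝ) := by
      exact_mod_cast congrArg (Int.cast : ℤ → ℝ) (Int.toNat_of_nonneg hnpos.le)
    rw [← hk2, ← hn, hnn]
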